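/- For every integer b ≥ 5, T(b) = Σ_{i=0}^{⌊b/2⌋} (−1)^i (b−2i)^{b−3} · binom(b, i) is nonzero. -/

import Mathlib

open Finset


def gT : ℕ → ℤ → ℤ
  | 0, t => if t = 0 ∨ t = 1 then 1 else 0
  | k+1, t => t * gT k t + (2*(k:ℤ) + 4 - t) * gT k (t - 2)

theorem gT_zero_left : ∀ k : ℕ, 1 ≤ k → ∀ t : ℤ, t ≤ 0 → gT k t = 0 := by
  intro k hk
  induction k with
  | zero => omega
  | succ n ih =>
    intro t ht
    rcases Nat.eq_zero_or_pos n with h | h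
    · subst h; simp only [gT]; split_ifs <;> omega
    · simp only [gT]
      rw [ih h t ht, ih h (t-2) (by omega)]; ring

theorem gT_zero_right : ∀ k : ℕ, 1 ≤ k → ∀ t : ℤ, 2*(k:ℤ)+2 ≤ t → gT k t = 0 := by
  intro k hk
  induction k with
  | zero => omega
  | succ n ih =>
    intro t ht
    rcases Nat.eq_zero_or_pos n with h | h
    · subst h; simp only [gT]
      have : (4:ℤ) ≤ t := by push_cast at ht; omega
      split_ifs <;> omega
    · simp only [gT]
      push_cast at ht
      rw [ih h t (by push_cast; omega), ih h (t-2) (by push_cast; omega)]; ring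

theorem gT_nonneg : ∀ k : ℕ, 1 ≤ k → ∀ t : ℤ, 0 ≤ gT k t := by
  intro k hk
  induction k with
  | zero => omega
  | succ n ih =>
    intro t
    rcases Nat.eq_zero_or_pos n with h | h
    · subst h; simp only [gT]; split_ifs <;> omega
    · rcases le_or_gt t 0 with h0 | h0
      · rw [gT_zero_left (n+1) (by omega) t h0]
      rcases le_or_gt (2*((n:ℤ)+1)+2) t with h1 | h1
      · rw [gT_zero_right (n+1) (by omega) t (by push_cast; push_cast at h1; omega)]
      simp only [gT]
      have h2 := ih h t
      have h3 := ih h (t-2)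
      have c1 : (0:ℤ) ≤ t := le_of_lt h0
      have c2 : (0:ℤ) ≤ 2*(n:ℤ)+4-t := by omega
      positivity

theorem gT_pos : ∀ k : ℕ, 1 ≤ k → ∀ t : ℤ, 1 ≤ t → t ≤ 2*(k:ℤ)+1 → 0 < gT k t := by
  intro k hk
  induction k with
  | zero => omega
  | succ n ih =>
    intro t ht1 ht2
    rcases Nat.eq_zero_or_pos n with h | h
    · subst h; simp only [gT]
      push_cast at ht2
      split_ifs <;> omega
    · push_cast at ht2
      simp only [gT]
      rcases le_or_gt t (2*(n:ℤ)+1) with hc | hc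
      · have h2 := ih h t ht1 hc
        have h3 := gT_nonneg n h (t-2)
        nlinarith
      · have h2 := ih h (t-2) (by omega) (by omega)
        have h3 := gT_nonneg n h t
        nlinarith

theorem gT_symm : ∀ k : ℕ, 1 ≤ k → ∀ t : ℤ, gT k t = gT k (2*(k:ℤ)+2-t) := by
  intro k hk
  induction k with
  | zero => omega
  | succ n ih =>
    intro t
    rcases Nat.eq_zero_or_pos n with h | h
    · subst h
      simp only [gT]
      push_cast
      split_ifs <;> omega
    · have e1 : gT n t = gT n (2*(n:ℤ)+2-t) := ih h t
      have e2 : gT n (t-2) = gT n (2*(n:ℤ)+4-t) := by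
        rw [ih h (t-2)]; ring_nf
      conv_lhs => simp only [gT]
      conv_rhs => simp only [gT]
      rw [e1, e2]
      have a1 : (2*((n:ℤ)+1)+2-t) = 2*(n:ℤ)+4-t := by push_cast; ring
      have a2 : (2*((n:ℤ)+1)+2-t) - 2 = 2*(n:ℤ)+2-t := by push_cast; ring
      push_cast
      ring_nf

theorem gT_mono : ∀ k : ℕ, 1 ≤ k → ∀ t : ℤ, -1 ≤ t → t + 2 ≤ (k:ℤ) + 1 → gT k t < gT k (t+2) := by
  intro k hk
  induction k with
  | zero => omega
  | succ n ih =>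
    intro t ht1 ht2
    rcases Nat.eq_zero_or_pos n with h | h
    · subst h
      simp only [gT]
      push_cast at ht2 ⊢
      split_ifs <;> omega
    · push_cast at ht2
      have key : gT (n+1) (t+2) - gT (n+1) t =
          (t+2)*(gT n (t+2) - gT n t) + (2*(n:ℤ)+4-t)*(gT n t - gT n (t-2)) := by
        simp only [gT]; ring_nf
      have hB : 0 ≤ gT n t - gT n (t-2) := by
        rcases le_or_gt t 0 with h0 | h0
        · rw [gT_zero_left n h (t-2) (by omega)]
          have := gT_nonneg n h t; omega
        · have h5 := ih h (t-2) (by omega) (by omega)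
          rw [show t-2+2 = t by ring] at h5
          omega
      rcases lt_or_eq_of_le ht2 with hc | hc
      · have hA : 0 < gT n (t+2) - gT n t := by
          have := ih h t ht1 (by omega); omega
        nlinarith
      · have hA : gT n (t+2) = gT n t := by
          rw [gT_symm n h (t+2)]
          congr 1; omega
        have hB' : 0 < gT n t - gT n (t-2) := by
          have h5 := ih h (t-2) (by omega) (by omega)
          rw [show t-2+2 = t by ring] at h5
          omega
        nlinarith



theorem pascal_sum (n : ℕ) (p : ℕ → ℤ) :
    ∑ i ∈ range (n+2), (-1:ℤ)^i * ((n+1).choose i : ℤ) * p i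
    = ∑ i ∈ range (n+1), (-1:ℤ)^i * (n.choose i : ℤ) * (p i - p (i+1)) := by
  rw [Finset.sum_range_succ' (fun i => (-1:ℤ)^i * ((n+1).choose i : ℤ) * p i) (n+1)]
  have h1 : ∀ i ∈ range (n+1),
      (-1:ℤ)^(i+1) * (((n+1).choose (i+1) : ℕ) : ℤ) * p (i+1)
      = (-1:ℤ)^i * (n.choose i : ℤ) * (- p (i+1)) + (-((-1:ℤ)^i * (n.choose (i+1) : ℤ) * p (i+1))) := by
    intro i _
    rw [Nat.choose_succ_succ]
    push_cast
    ring
  rw [Finset.sum_congr rfl h1, Finset.sum_add_distrib]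
  have h2 : ∀ i ∈ range (n+1),
      (-1:ℤ)^i * (n.choose i : ℤ) * (p i - p (i+1))
      = (-1:ℤ)^i * (n.choose i : ℤ) * p i + (-1:ℤ)^i * (n.choose i : ℤ) * (- p (i+1)) := by
    intro i _; ring
  rw [Finset.sum_congr rfl h2, Finset.sum_add_distrib]
  rw [Finset.sum_range_succ' (fun i => (-1:ℤ)^i * ((n.choose i : ℕ) : ℤ) * p i) n]
  have h3 : ∑ i ∈ range n, (-1:ℤ)^(i+1) * ((n.choose (i+1) : ℕ) : ℤ) * p (i+1)
      = ∑ i ∈ range (n+1), (-((-1:ℤ)^i * (n.choose (i+1) : ℤ) * p (i+1))) := by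
    rw [Finset.sum_range_succ]
    rw [Nat.choose_succ_self]
    push_cast
    rw [Finset.sum_congr rfl (fun i _ => by ring : ∀ i ∈ range n,
      (-1:ℤ)^(i+1) * ((n.choose (i+1) : ℕ) : ℤ) * p (i+1) = -((-1:ℤ)^i * (n.choose (i+1) : ℤ) * p (i+1)))]
    ring
  rw [← h3]
  simp only [pow_zero, Nat.choose_zero_right, Nat.cast_one, one_mul]
  ring



theorem max_pow_succ (x : ℤ) (k : ℕ) (hk : 1 ≤ k) : x * (max x 0)^k = (max x 0)^(k+1) := by
  rcases le_or_gt x 0 with h | h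
  · rw [max_eq_right h, zero_pow (by omega), zero_pow (by omega), mul_zero]
  · rw [max_eq_left h.le]; ring

theorem chooseZ1 (n i : ℕ) : (((n+1).choose (i+1) : ℕ) : ℤ) * ((i:ℤ)+1) = ((n:ℤ)+1) * ((n.choose i : ℕ) : ℤ) := by
  have h := Nat.add_one_mul_choose_eq n i
  have h2 : (((n+1) * n.choose i : ℕ) : ℤ) = (((n+1).choose (i+1) * (i+1) : ℕ) : ℤ) := by
    exact_mod_cast congrArg (Nat.cast : ℕ → ℤ) h
  push_cast at h2
  linarith

theorem chooseZ2 (n i : ℕ) (hi : i ≤ n) :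
    (((n+1).choose i : ℕ) : ℤ) * ((n:ℤ)+1-i) = ((n:ℤ)+1) * ((n.choose i : ℕ) : ℤ) := by
  have h1 : (n+1).choose (i+1) * (i+1) = (n+1).choose i * (n+1-i) := by
    have := Nat.choose_succ_right_eq (n+1) i
    simpa using this
  have h2 : (((n+1).choose i : ℕ) : ℤ) * (((n:ℕ)+1-i : ℕ) : ℤ) = (((n+1).choose (i+1) : ℕ) : ℤ) * ((i:ℤ)+1) := by
    exact_mod_cast congrArg (Nat.cast : ℕ → ℤ) h1.symm
  rw [chooseZ1 n i] at h2
  rw [← h2]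
  congr 1
  push_cast [Nat.cast_sub (by omega : i ≤ n+1)]
  ring

theorem key_step (n : ℕ) (hn : 1 ≤ n) (t : ℤ) :
    t * (∑ i ∈ range (n+2), (-1:ℤ)^i * ((n+1).choose i : ℤ) * (max (t-2*i) 0)^n)
      + (2*(n:ℤ)+4-t) * (∑ i ∈ range (n+2), (-1:ℤ)^i * ((n+1).choose i : ℤ) * (max (t-2-2*i) 0)^n)
    = ∑ i ∈ range (n+2), (-1:ℤ)^i * ((n+1).choose i : ℤ)
        * ((max (t-2*i) 0)^(n+1) - (max (t-2*(i+1)) 0)^(n+1)) := by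
  rw [Finset.mul_sum, Finset.mul_sum, ← Finset.sum_add_distrib]
  have hterm : ∀ i ∈ range (n+2),
      t * ((-1:ℤ)^i * ((n+1).choose i : ℤ) * (max (t-2*i) 0)^n)
        + (2*(n:ℤ)+4-t) * ((-1:ℤ)^i * ((n+1).choose i : ℤ) * (max (t-2-2*i) 0)^n)
      = (-1:ℤ)^i * ((n+1).choose i : ℤ) * ((max (t-2*i) 0)^(n+1) - (max (t-2*(i+1)) 0)^(n+1))
        + ((-1:ℤ)^i * ((n+1).choose i : ℤ) * (2*i) * (max (t-2*i) 0)^n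
           + (-1:ℤ)^i * ((n+1).choose i : ℤ) * (2*(n:ℤ)+2-2*i) * (max (t-2*(i+1)) 0)^n) := by
    intro i _
    have e3 : t - 2 - 2*(i:ℤ) = t - 2*((i:ℤ)+1) := by ring
    have e1 : (t - 2*(i:ℤ)) * (max (t-2*(i:ℤ)) 0)^n = (max (t-2*(i:ℤ)) 0)^(n+1) :=
      max_pow_succ _ _ hn
    have e2 : (t - 2*((i:ℤ)+1)) * (max (t-2*((i:ℤ)+1)) 0)^n = (max (t-2*((i:ℤ)+1)) 0)^(n+1) :=
      max_pow_succ _ _ hn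
    rw [e3]
    push_cast
    linear_combination ((-1:ℤ)^i * ((n+1).choose i : ℤ)) * e1
      - ((-1:ℤ)^i * ((n+1).choose i : ℤ)) * e2
  rw [Finset.sum_congr rfl hterm, Finset.sum_add_distrib]
  have hE : ∑ i ∈ range (n+2),
      ((-1:ℤ)^i * ((n+1).choose i : ℤ) * (2*i) * (max (t-2*i) 0)^n
        + (-1:ℤ)^i * ((n+1).choose i : ℤ) * (2*(n:ℤ)+2-2*i) * (max (t-2*(i+1)) 0)^n) = 0 := by
    rw [Finset.sum_add_distrib]
    have hE1 : ∑ i ∈ range (n+2), (-1:ℤ)^i * ((n+1).choose i : ℤ) * (2*i) * (max (t-2*i) 0)^n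
        = ∑ i ∈ range (n+1), (-((-1:ℤ)^i * (2*((n:ℤ)+1) * (n.choose i : ℤ)) * (max (t-2*(i+1)) 0)^n)) := by
      rw [Finset.sum_range_succ'
        (fun i => (-1:ℤ)^i * ((n+1).choose i : ℤ) * (2*i) * (max (t-2*i) 0)^n) (n+1)]
      simp only [Nat.cast_zero, mul_zero, zero_mul, add_zero, Nat.cast_ofNat, pow_zero, one_mul]
      apply Finset.sum_congr rfl
      intro i _
      have h := chooseZ1 n i
      push_cast
      linear_combination (-2 * (-1:ℤ)^i * (max (t-2*((i:ℤ)+1)) 0)^n) * h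
    have hE2 : ∑ i ∈ range (n+2), (-1:ℤ)^i * ((n+1).choose i : ℤ) * (2*(n:ℤ)+2-2*i) * (max (t-2*(i+1)) 0)^n
        = ∑ i ∈ range (n+1), ((-1:ℤ)^i * (2*((n:ℤ)+1) * (n.choose i : ℤ)) * (max (t-2*(i+1)) 0)^n) := by
      rw [Finset.sum_range_succ]
      have hz : (2*(n:ℤ)+2-2*((n:ℕ)+1:ℕ)) = 0 := by push_cast; ring
      rw [show ((n:ℕ)+1:ℕ) = n+1 from rfl]
      push_cast
      rw [show (2*(n:ℤ)+2-2*((n:ℤ)+1)) = 0 by ring]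
      simp only [mul_zero, zero_mul, add_zero]
      apply Finset.sum_congr rfl
      intro i hi
      have hile : i ≤ n := by simp at hi; omega
      have h := chooseZ2 n i hile
      linear_combination (2 * (-1:ℤ)^i * (max (t-2*((i:ℤ)+1)) 0)^n) * h
    rw [hE1, hE2, ← Finset.sum_add_distrib]
    apply Finset.sum_eq_zero
    intro i _
    ring
  rw [hE, add_zero]


theorem gT_closed : ∀ k : ℕ, 1 ≤ k → ∀ t : ℤ,
    gT k t = ∑ i ∈ range (k+2), (-1:ℤ)^i * ((k+1).choose i : ℤ) * (max (t - 2*i) 0)^k := by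
  intro k hk
  induction k with
  | zero => omega
  | succ n ih =>
    intro t
    rcases Nat.eq_zero_or_pos n with h | h
    · subst h
      simp only [gT, Finset.sum_range_succ, Finset.sum_range_zero, pow_one]
      norm_num
      rcases le_or_gt t 0 with h1 | h1 <;> rcases le_or_gt t 2 with h2 | h2 <;>
        rcases le_or_gt t 4 with h3 | h3 <;>
      simp [max_def] <;> split_ifs <;> omega
    · have hn : 1 ≤ n := h
      simp only [gT]
      rw [ih hn t, ih hn (t-2)]
      rw [pascal_sum (n+1) (fun i => (max (t - 2*i) 0)^(n+1))]
      rw [key_step n hn t]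
      apply Finset.sum_congr rfl
      intro i _
      push_cast
      ring_nf

theorem stmt12 (b : ℕ) (hb : 5 ≤ b) :
    ∑ i ∈ Finset.range (b / 2 + 1),
      (-1 : ℤ) ^ i * ((b : ℤ) - 2 * i) ^ (b - 3) * (Nat.choose b i : ℤ) ≠ 0 := by
  obtain ⟨k, rfl⟩ : ∃ k, b = k + 3 := ⟨b - 3, by omega⟩
  have hk : 2 ≤ k := by omega
  have hexp : k + 3 - 3 = k := rfl
  rw [hexp]
  push_cast
  set t : ℤ := (k:ℤ) + 3 with hts
  have hA : ∑ i ∈ range ((k+3)/2 + 1), (-1:ℤ)^i * ((k:ℤ) + 3 - 2*i)^k * ((k+3).choose i : ℤ)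
      = ∑ i ∈ range ((k+3)/2 + 1), (-1:ℤ)^i * ((k+3).choose i : ℤ) * (max (t - 2*i) 0)^k := by
    apply Finset.sum_congr rfl
    intro i hi
    have hile : 2*i ≤ k+3 := by
      simp only [Finset.mem_range] at hi
      omega
    have hge : (0:ℤ) ≤ t - 2*i := by
      have h' : ((2*i : ℕ) : ℤ) ≤ ((k+3 : ℕ) : ℤ) := Nat.cast_le.mpr hile
      push_cast at h'
      rw [hts]
      omega
    rw [max_eq_left hge, hts]
    ring
  have hB : ∑ i ∈ range ((k+3)/2 + 1), (-1:ℤ)^i * ((k+3).choose i : ℤ) * (max (t - 2*i) 0)^k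
      = ∑ i ∈ range (k+4), (-1:ℤ)^i * ((k+3).choose i : ℤ) * (max (t - 2*i) 0)^k := by
    apply Finset.sum_subset (Finset.range_subset_range.mpr (by omega : (k+3)/2+1 ≤ k+4))
    intro i hi hni
    have hgt : k + 3 < 2*i := by
      simp only [Finset.mem_range] at hi hni
      omega
    have hlt : t - 2*i < 0 := by
      have h' : ((k+3 : ℕ) : ℤ) < ((2*i : ℕ) : ℤ) := Nat.cast_lt.mpr hgt
      push_cast at h'
      rw [hts]
      omega
    rw [max_eq_right hlt.le, zero_pow (by omega : k ≠ 0)]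
    ring
  rw [hA, hB]
  have h2 : ∑ i ∈ range (k+4), (-1:ℤ)^i * ((k+3).choose i : ℤ) * (max (t - 2*i) 0)^k
      = ∑ i ∈ range (k+2), (-1:ℤ)^i * ((k+1).choose i : ℤ)
          * ((max (t - 2*i) 0)^k - 2*(max (t - 2*(i+1)) 0)^k + (max (t - 2*(i+2)) 0)^k) := by
    rw [show k+4 = (k+2)+2 from rfl, show k+3 = (k+2)+1 from rfl,
      pascal_sum (k+2) (fun i => (max (t - 2*i) 0)^k)]
    push_cast
    rw [show k+2+1 = (k+1)+2 from rfl,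
      pascal_sum (k+1) (fun i => (max (t - 2*i) 0)^k - (max (t - 2*((i:ℤ)+1)) 0)^k)]
    apply Finset.sum_congr rfl
    intro i _
    push_cast
    ring_nf
  rw [h2]
  have h3 : ∑ i ∈ range (k+2), (-1:ℤ)^i * ((k+1).choose i : ℤ)
          * ((max (t - 2*i) 0)^k - 2*(max (t - 2*(i+1)) 0)^k + (max (t - 2*(i+2)) 0)^k)
      = gT k t - 2 * gT k (t-2) + gT k (t-4) := by
    rw [gT_closed k (by omega) t, gT_closed k (by omega) (t-2), gT_closed k (by omega) (t-4)]
    rw [Finset.mul_sum, ← Finset.sum_sub_distrib, ← Finset.sum_add_distrib]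
    apply Finset.sum_congr rfl
    intro i _
    have e1 : t - 2 - 2*(i:ℤ) = t - 2*((i:ℤ)+1) := by ring
    have e2 : t - 4 - 2*(i:ℤ) = t - 2*((i:ℤ)+2) := by ring
    rw [e1, e2]
    push_cast
    ring_nf
  rw [h3]
  have hsym : gT k (t-4) = gT k t := by
    rw [gT_symm k (by omega) (t-4)]
    congr 1
    rw [hts]
    push_cast
    omega
  have hmono : gT k (t-4) < gT k (t-2) := by
    have hm := gT_mono k (by omega) (t-4) (by rw [hts]; push_cast; omega)
      (by rw [hts]; push_cast; omega)
    rw [show t-4+2 = t-2 by ring] at hm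
    exact hm
  omega
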